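/- Let p be a prime, let I be a set, and let A = ℤ_p^I be the product of I copies of the compact group ℤ_p of p-adic integers, with the product topology. If G is a dense subgroup of A that is sequentially complete and minimal (in its subspace topology), then there exists k ∈ ℕ such that p^k·a ∈ G for every a ∈ A. -/

import Mathlib

open Topology

/-- A Hausdorff topological (additive) group topology `t` is *minimal* if there is no
strictly coarser Hausdorff group topology on the same group: every Hausdorff group
topology `t'` that is coarser than `t` (i.e. every `t'`-open set is `t`-open) equals `t`. -/
def IsMinimalAddGroup (G : Type*) [AddCommGroup G] [t : TopologicalSpace G] : Prop :=
  ∀ t' : TopologicalSpace G, @IsTopologicalAddGroup G t' _ → @T2Space G t' →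
    (∀ s : Set G, @IsOpen G t' s → @IsOpen G t s) → t' = t

/-- A topological abelian group is *sequentially complete* if every Cauchy sequence converges. -/
def IsSequentiallyComplete (G : Type*) [AddCommGroup G] [TopologicalSpace G] : Prop :=
  ∀ u : ℕ → G, (∀ V ∈ 𝓝 (0 : G), ∃ N : ℕ, ∀ m ≥ N, ∀ n ≥ N, u m - u n ∈ V) →
    ∃ x : G, Filter.Tendsto u Filter.atTop (𝓝 x)

namespace PadicKeyLemma
open Filter

variable {p : ℕ} [Fact p.Prime] {I : Type*}


/-- Sequential completeness of a subgroup of `A` implies sequential closedness in `A`. -/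
theorem seq_closed (G : AddSubgroup (I → ℤ_[p])) (hsc : IsSequentiallyComplete G)
    (u : ℕ → (I → ℤ_[p])) (hu : ∀ n, u n ∈ G) (x : I → ℤ_[p])
    (hx : Tendsto u atTop (𝓝 x)) : x ∈ G := by
  have hcau : ∀ V ∈ 𝓝 (0 : ↥G), ∃ N : ℕ, ∀ m ≥ N, ∀ n ≥ N,
      (⟨u m, hu m⟩ : ↥G) - ⟨u n, hu n⟩ ∈ V := by
    intro V hV
    -- V contains preimage of a nbhd of 0 in A
    rw [nhds_induced Subtype.val, Filter.mem_comap] at hV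
    obtain ⟨U, hU, hUV⟩ := hV
    -- find U' with U' - U' ⊆ U
    have hsub : Tendsto (fun q : (I → ℤ_[p]) × (I → ℤ_[p]) => q.1 - q.2) (𝓝 ((0 : I → ℤ_[p]), (0 : I → ℤ_[p]))) (𝓝 (0 : I → ℤ_[p])) := by
      have := (continuous_fst.sub continuous_snd :
        Continuous fun q : (I → ℤ_[p]) × (I → ℤ_[p]) => q.1 - q.2).tendsto ((0 : I → ℤ_[p]), (0 : I → ℤ_[p]))
      convert this using 2 <;> simp
    have hU2 : (fun q : (I → ℤ_[p]) × (I → ℤ_[p]) => q.1 - q.2) ⁻¹' U ∈ 𝓝 ((0 : I → ℤ_[p]), (0 : I → ℤ_[p])) := hsub hU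
    rw [mem_nhds_prod_iff] at hU2
    obtain ⟨U1, hU1, U2, hU22, hU12⟩ := hU2
    have hten : Tendsto (fun n => u n - x) atTop (𝓝 (0 : I → ℤ_[p])) := by
      simpa using hx.sub (tendsto_const_nhds (x := x))
    have h1 := hten.eventually_mem hU1
    have h2 := hten.eventually_mem hU22
    obtain ⟨N, hN⟩ := (h1.and h2).exists_forall_of_atTop
    refine ⟨N, fun m hm n hn => ?_⟩
    apply hUV
    have : u m - u n ∈ U := by
      have : ((u m - x, u n - x) : (I → ℤ_[p]) × (I → ℤ_[p])) ∈ U1 ×ˢ U2 :=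
        ⟨(hN m hm).1, (hN n hn).2⟩
      have := hU12 this
      simpa using this
    simpa using this
  obtain ⟨g, hg⟩ := hsc _ hcau
  have : Tendsto u atTop (𝓝 (g : I → ℤ_[p])) := by
    have := (continuous_subtype_val.tendsto g).comp hg
    exact this
  have hxg : x = (g : I → ℤ_[p]) := tendsto_nhds_unique hx this
  rw [hxg]; exact g.2

/-- `G` is closed under `ℤ_p`-scalar multiplication. -/
theorem smul_mem' (G : AddSubgroup (I → ℤ_[p])) (hsc : IsSequentiallyComplete G)
    (c : ℤ_[p]) (x : I → ℤ_[p]) (hx : x ∈ G) : c • x ∈ G := by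
  apply seq_closed G hsc (fun j => ((c.appr j : ℤ_[p])) • x)
  · intro j
    have : ((c.appr j : ℤ_[p])) • x = (c.appr j) • x := by
      exact_mod_cast Nat.cast_smul_eq_nsmul ℤ_[p] (c.appr j) x
    rw [this]
    exact AddSubgroup.nsmul_mem G hx _
  · have happr : Tendsto (fun j => ((c.appr j : ℤ_[p]))) atTop (𝓝 c) := by
      rw [tendsto_iff_dist_tendsto_zero]
      have hb : Tendsto (fun j : ℕ => ((p : ℝ)⁻¹) ^ j) atTop (𝓝 0) := by
        apply tendsto_pow_atTop_nhds_zero_of_lt_one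
        · positivity
        · rw [inv_lt_one_iff₀]; right; exact_mod_cast (Fact.out : p.Prime).one_lt
      apply squeeze_zero (fun _ => dist_nonneg) _ hb
      intro j
      have := (PadicInt.norm_le_pow_iff_mem_span_pow (c - (c.appr j : ℤ_[p])) j).mpr (PadicInt.appr_spec j c)
      rw [dist_eq_norm, ← norm_neg]
      simp only [neg_sub]
      calc ‖c - (c.appr j : ℤ_[p])‖ ≤ (p : ℝ) ^ (-(j:ℤ)) := this
        _ = ((p:ℝ)⁻¹) ^ j := by rw [zpow_neg, zpow_natCast, inv_pow]
    exact ((continuous_id.smul (continuous_const : Continuous fun _ : ℤ_[p] => x)).tendsto c).comp happr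


theorem essential (G : AddSubgroup (I → ℤ_[p])) (hd : Dense (G : Set (I → ℤ_[p])))
    (hmin : IsMinimalAddGroup G) (a : I → ℤ_[p]) (ha : a ≠ 0) :
    ∃ c : ℤ_[p], c ≠ 0 ∧ c • a ∈ G := by
  by_contra hc
  push_neg at hc
  -- the closed subgroup N = ℤ_p • a
  let N : AddSubgroup (I → ℤ_[p]) := (Submodule.span ℤ_[p] {a}).toAddSubgroup
  have hNmem : ∀ x : I → ℤ_[p], x ∈ N ↔ ∃ c : ℤ_[p], c • a = x := by
    intro x
    constructor
    · intro hx
      exact Submodule.mem_span_singleton.mp hx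
    · rintro ⟨c, rfl⟩
      exact Submodule.mem_span_singleton.mpr ⟨c, rfl⟩
  have hNclosed : IsClosed (N : Set (I → ℤ_[p])) := by
    have : (N : Set (I → ℤ_[p])) = Set.range (fun c : ℤ_[p] => c • a) := by
      ext x
      rw [SetLike.mem_coe, hNmem x]
      exact Iff.rfl
    rw [this]
    exact (isCompact_range ((continuous_id.smul continuous_const))).isClosed
  haveI : IsClosed ((N : AddSubgroup (I → ℤ_[p])) : Set (I → ℤ_[p])) := hNclosed
  let f : ↥G →+ (I → ℤ_[p]) ⧸ N := (QuotientAddGroup.mk' N).comp G.subtype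
  have hfinj : Function.Injective f := by
    rw [injective_iff_map_eq_zero]
    intro g hg
    have hmem : (g : I → ℤ_[p]) ∈ N := by
      have : ((g : I → ℤ_[p]) : (I → ℤ_[p]) ⧸ N) = 0 := hg
      exact (QuotientAddGroup.eq_zero_iff _).mp this
    obtain ⟨c, hceq⟩ := (hNmem _).mp hmem
    by_cases h0 : c = 0
    · ext : 1
      simp only [← hceq, h0, zero_smul, AddSubgroup.coe_zero]
    · exact absurd (hceq ▸ g.2) (hc c h0)
  have hfc : @Continuous ↥G ((I → ℤ_[p]) ⧸ N) instTopologicalSpaceSubtype _ f :=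
    ((continuous_quotient_mk').comp continuous_subtype_val)
  -- closed nbhd of 0 avoiding a, pulled back to the subgroup
  obtain ⟨U, ⟨hU𝓝, hUclosed⟩, hUsub⟩ := (closed_nhds_basis (0 : I → ℤ_[p])).mem_iff.mp
    ((isOpen_compl_singleton (x := a)).mem_nhds (by simpa using (Ne.symm ha)))
  have hU𝓝' : U ∈ 𝓝 (((0 : ↥G) : I → ℤ_[p])) := by simpa using hU𝓝
  have h1 : (Subtype.val ⁻¹' U : Set ↥G) ∈ 𝓝 (0 : ↥G) :=
    continuous_subtype_val.continuousAt.preimage_mem_nhds hU𝓝'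
  -- the coarser topology
  let t' : TopologicalSpace ↥G := TopologicalSpace.induced f inferInstance
  have hga : @IsTopologicalAddGroup ↥G t' _ := topologicalAddGroup_induced f
  have ht2 : @T2Space ↥G t' := by
    letI := t'
    exact (Topology.IsEmbedding.mk ⟨rfl⟩ hfinj).t2Space
  have hcoarser : ∀ s : Set ↥G, @IsOpen _ t' s → @IsOpen _ instTopologicalSpaceSubtype s := by
    intro s hs
    have hs' : ∃ u : Set ((I → ℤ_[p]) ⧸ N), IsOpen u ∧ f ⁻¹' u = s := hs
    obtain ⟨u, hu, rfl⟩ := hs'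
    exact @Continuous.isOpen_preimage ↥G ((I → ℤ_[p]) ⧸ N) instTopologicalSpaceSubtype _ _ hfc u hu
  have heq := hmin t' hga ht2 hcoarser
  have hle : (instTopologicalSpaceSubtype : TopologicalSpace ↥G) =
      TopologicalSpace.induced f inferInstance := heq.symm
  rw [hle] at h1
  rw [nhds_induced f (0 : ↥G), map_zero] at h1
  obtain ⟨V, hV, hVsub⟩ := Filter.mem_comap.mp h1
  obtain ⟨V', hV'sub, hV'open, hV'0⟩ := mem_nhds_iff.mp hV
  have hOopen : IsOpen ((QuotientAddGroup.mk' N ⁻¹' V') ∩ Uᶜ) :=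
    ((continuous_quotient_mk').isOpen_preimage V' hV'open).inter hUclosed.isOpen_compl
  have haN : a ∈ N := (hNmem a).mpr ⟨1, one_smul _ _⟩
  have haO : a ∈ (QuotientAddGroup.mk' N ⁻¹' V') ∩ Uᶜ := by
    constructor
    · show ((a : (I → ℤ_[p]) ⧸ N)) ∈ V'
      have : ((a : (I → ℤ_[p]) ⧸ N)) = 0 := (QuotientAddGroup.eq_zero_iff _).mpr haN
      rw [this]; exact hV'0
    · intro hU
      exact (hUsub hU) rfl
  obtain ⟨g, hgG, hgO⟩ := hd.exists_mem_open hOopen ⟨a, haO⟩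
  have hgV : (⟨g, hgG⟩ : ↥G) ∈ f ⁻¹' V := by
    show f ⟨g, hgG⟩ ∈ V
    exact hV'sub hgO.1
  have : g ∈ U := hVsub hgV
  exact hgO.2 this


/-- The set of elements of `ℤ_p^I` all of whose coordinates are divisible by `p^j`. -/
def Ball (p : ℕ) [Fact p.Prime] (I : Type*) (j : ℕ) : Set (I → ℤ_[p]) :=
  {z | ∀ i, ‖z i‖ ≤ (p : ℝ) ^ (-(j : ℤ))}

theorem ball_anti {j j' : ℕ} (h : j ≤ j') : Ball p I j' ⊆ Ball p I j := by
  intro z hz i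
  refine (hz i).trans ?_
  apply zpow_le_zpow_right₀
  · exact_mod_cast (Fact.out : p.Prime).one_lt.le
  · omega

theorem ball_zero_mem (j : ℕ) : (0 : I → ℤ_[p]) ∈ Ball p I j := by
  intro i
  simp only [Pi.zero_apply, norm_zero]
  positivity

theorem ball_add {j : ℕ} {z w : I → ℤ_[p]} (hz : z ∈ Ball p I j) (hw : w ∈ Ball p I j) :
    z + w ∈ Ball p I j := by
  intro i
  calc ‖(z + w) i‖ = ‖z i + w i‖ := rfl
    _ ≤ ‖z i‖ ⊔ ‖w i‖ := PadicInt.nonarchimedean _ _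
    _ ≤ _ := sup_le (hz i) (hw i)

theorem ball_neg {j : ℕ} {z : I → ℤ_[p]} (hz : z ∈ Ball p I j) : -z ∈ Ball p I j := by
  intro i
  calc ‖(-z) i‖ = ‖z i‖ := norm_neg _
    _ ≤ _ := hz i

theorem ball_sub {j : ℕ} {z w : I → ℤ_[p]} (hz : z ∈ Ball p I j) (hw : w ∈ Ball p I j) :
    z - w ∈ Ball p I j := by
  rw [sub_eq_add_neg]; exact ball_add hz (ball_neg hw)

theorem smul_mem_ball {j : ℕ} {z : I → ℤ_[p]} (hz : z ∈ Ball p I j) (s : ℕ) :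
    (p : ℤ_[p]) ^ s • z ∈ Ball p I (s + j) := by
  intro i
  have : ((p : ℤ_[p]) ^ s • z) i = (p : ℤ_[p]) ^ s * z i := rfl
  rw [this, norm_mul, PadicInt.norm_p_pow]
  calc (p:ℝ) ^ (-(s:ℤ)) * ‖z i‖ ≤ (p:ℝ) ^ (-(s:ℤ)) * (p:ℝ) ^ (-(j:ℤ)) := by
        apply mul_le_mul_of_nonneg_left (hz i) (by positivity)
    _ = (p:ℝ) ^ (-((s+j : ℕ):ℤ)) := by
        rw [← zpow_add₀ (by exact_mod_cast (Fact.out : p.Prime).pos.ne')]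
        push_cast; ring_nf
  
theorem pow_smul_mem_ball (j : ℕ) (b : I → ℤ_[p]) : (p : ℤ_[p]) ^ j • b ∈ Ball p I j := by
  intro i
  have : ((p : ℤ_[p]) ^ j • b) i = (p : ℤ_[p]) ^ j * b i := rfl
  rw [this, norm_mul, PadicInt.norm_p_pow]
  calc (p:ℝ) ^ (-(j:ℤ)) * ‖b i‖ ≤ (p:ℝ) ^ (-(j:ℤ)) * 1 :=
        mul_le_mul_of_nonneg_left (PadicInt.norm_le_one _) (by positivity)
    _ = _ := mul_one _

theorem exists_of_mem_ball {j : ℕ} {z : I → ℤ_[p]} (hz : z ∈ Ball p I j) :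
    ∃ b : I → ℤ_[p], z = (p : ℤ_[p]) ^ j • b := by
  have : ∀ i, ∃ c : ℤ_[p], z i = (p : ℤ_[p]) ^ j * c := by
    intro i
    have := (PadicInt.norm_le_pow_iff_mem_span_pow (z i) j).mp (hz i)
    rw [Ideal.mem_span_singleton] at this
    obtain ⟨c, hc⟩ := this
    exact ⟨c, hc⟩
  choose b hb using this
  exact ⟨b, funext hb⟩

theorem ball_tendsto_zero {w : ℕ → (I → ℤ_[p])} (hw : ∀ j, w j ∈ Ball p I j) :
    Tendsto w atTop (𝓝 0) := by
  rw [tendsto_pi_nhds]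
  intro i
  have hb : Tendsto (fun j : ℕ => ((p : ℝ)⁻¹) ^ j) atTop (𝓝 0) := by
    apply tendsto_pow_atTop_nhds_zero_of_lt_one
    · positivity
    · rw [inv_lt_one_iff₀]; right; exact_mod_cast (Fact.out : p.Prime).one_lt
  have : Tendsto (fun j => w j i) atTop (𝓝 0) := by
    apply squeeze_zero_norm _ hb
    intro j
    calc ‖w j i‖ ≤ (p:ℝ) ^ (-(j:ℤ)) := hw j i
      _ = ((p:ℝ)⁻¹) ^ j := by rw [zpow_neg, zpow_natCast, inv_pow]
  simpa using this


/-- If `z` can be approximated from `G` to all orders of `p`-divisibility, then `z ∈ G`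
(granted sequential closedness). -/
theorem mem_of_approx (G : AddSubgroup (I → ℤ_[p]))
    (hseq : ∀ (u : ℕ → (I → ℤ_[p])), (∀ n, u n ∈ G) → ∀ x, Tendsto u atTop (𝓝 x) → x ∈ G)
    (z : I → ℤ_[p]) (hz : ∀ j : ℕ, ∃ g ∈ G, z - g ∈ Ball p I j) : z ∈ G := by
  choose g hg w using hz
  apply hseq g hg
  have : Tendsto (fun j => z - g j) atTop (𝓝 0) := ball_tendsto_zero w
  have h2 : Tendsto (fun j => z - (z - g j)) atTop (𝓝 (z - 0)) := tendsto_const_nhds.sub this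
  simpa using h2

theorem main_aux (G : AddSubgroup (I → ℤ_[p]))
    (hsmul : ∀ (c : ℤ_[p]) (x : I → ℤ_[p]), x ∈ G → c • x ∈ G)
    (htor : ∀ a : I → ℤ_[p], ∃ m : ℕ, (p : ℤ_[p]) ^ m • a ∈ G)
    (hseq : ∀ (u : ℕ → (I → ℤ_[p])), (∀ n, u n ∈ G) → ∀ x, Tendsto u atTop (𝓝 x) → x ∈ G) :
    ∃ k : ℕ, ∀ a : I → ℤ_[p], (p : ℤ_[p]) ^ k • a ∈ G := by
  by_contra hcon
  push_neg at hcon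
  -- Step existence
  have hstep : ∀ (P : I → ℤ_[p]) (t N : ℕ), ∃ q : (I → ℤ_[p]) × ℕ,
      (∃ x, q.1 = P + (p : ℤ_[p]) ^ t • x) ∧ t < q.2 ∧
      ∀ s ≤ N, ∀ g ∈ G, (p : ℤ_[p]) ^ s • q.1 - g ∉ Ball p I (s + q.2) := by
    intro P t N
    -- find x with p^N • (P + p^t • x) ∉ G
    have hx : ∃ x, (p : ℤ_[p]) ^ N • (P + (p : ℤ_[p]) ^ t • x) ∉ G := by
      by_contra hx
      push_neg at hx
      have h0 : (p : ℤ_[p]) ^ N • P ∈ G := by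
        have := hx 0
        simpa using this
      obtain ⟨a, ha⟩ := hcon (N + t)
      apply ha
      have := hx a
      rw [smul_add, smul_smul, ← pow_add] at this
      have h2 := AddSubgroup.sub_mem G this h0
      simpa using h2
    obtain ⟨x, hxG⟩ := hx
    set P' := P + (p : ℤ_[p]) ^ t • x with hP'
    have hsP : ∀ s ≤ N, (p : ℤ_[p]) ^ s • P' ∉ G := by
      intro s hs hmem
      apply hxG
      have : (p : ℤ_[p]) ^ N • P' = (p : ℤ_[p]) ^ (N - s) • ((p : ℤ_[p]) ^ s • P') := by
        rw [smul_smul, ← pow_add, Nat.sub_add_cancel hs]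
      rw [this]
      exact hsmul _ _ hmem
    have hj : ∀ s : ℕ, ∃ j : ℕ, s ≤ N → ∀ g ∈ G, (p : ℤ_[p]) ^ s • P' - g ∉ Ball p I j := by
      intro s
      by_cases hs : s ≤ N
      · by_contra hc2
        push_neg at hc2
        have : (p : ℤ_[p]) ^ s • P' ∈ G := by
          apply mem_of_approx G hseq
          intro j
          obtain ⟨g, hg, hball⟩ := (hc2 j).2
          exact ⟨g, hg, hball⟩
        exact hsP s hs this
      · exact ⟨0, fun h' => absurd h' hs⟩
    choose j hjspec using hj
    refine ⟨(P', (Finset.range (N + 1)).sup j + t + 1), ⟨x, rfl⟩, by omega, ?_⟩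
    intro s hs g hg hball
    apply hjspec s hs g hg
    apply ball_anti _ hball
    have : j s ≤ (Finset.range (N + 1)).sup j :=
      Finset.le_sup (Finset.mem_range.mpr (by omega))
    omega
  -- The recursion
  let F : ℕ → (I → ℤ_[p]) × ℕ := fun N =>
    Nat.rec ((0 : I → ℤ_[p]), 0) (fun N st => Classical.choose (hstep st.1 st.2 N)) N
  set Pf : ℕ → (I → ℤ_[p]) := fun N => (F N).1 with hPf
  set t : ℕ → ℕ := fun N => (F N).2 with ht
  have hspec : ∀ N, (∃ x, Pf (N + 1) = Pf N + (p : ℤ_[p]) ^ (t N) • x) ∧ t N < t (N + 1) ∧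
      ∀ s ≤ N, ∀ g ∈ G, (p : ℤ_[p]) ^ s • Pf (N + 1) - g ∉ Ball p I (s + t (N + 1)) :=
    fun N => Classical.choose_spec (hstep (F N).1 (F N).2 N)
  have htmono : StrictMono t := strictMono_nat_of_lt_succ (fun n => (hspec n).2.1)
  -- difference chain
  have hchain : ∀ N m, N ≤ m → Pf m - Pf N ∈ Ball p I (t N) := by
    intro N m hNm
    induction m with
    | zero =>
      have : N = 0 := Nat.le_zero.mp hNm
      subst this
      simpa using ball_zero_mem (p := p) (I := I) (t 0)
    | succ m ih =>
      by_cases hc : N = m + 1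
      · subst hc
        simpa using ball_zero_mem (p := p) (I := I) (t (m + 1))
      · have hNm' : N ≤ m := by omega
        have h1 : Pf (m + 1) - Pf m ∈ Ball p I (t N) := by
          obtain ⟨x, hx⟩ := (hspec m).1
          rw [hx]
          have : Pf m + (p : ℤ_[p]) ^ t m • x - Pf m = (p : ℤ_[p]) ^ t m • x := by abel
          rw [this]
          exact ball_anti (htmono.monotone hNm') (pow_smul_mem_ball _ _)
        have h2 := ih hNm'
        have : Pf (m + 1) - Pf N = (Pf (m + 1) - Pf m) + (Pf m - Pf N) := by abel
        rw [this]
        exact ball_add h1 h2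
  have hone_le : (1 : ℝ) ≤ (p : ℝ) := by exact_mod_cast (Fact.out : p.Prime).one_lt.le
  have htN : ∀ N : ℕ, (p : ℝ) ^ (-(t N : ℤ)) ≤ (p : ℝ) ^ (-(N : ℤ)) := by
    intro N
    apply zpow_le_zpow_right₀ hone_le
    have := htmono.le_apply (x := N)
    omega
  -- Cauchy and limit
  have hcauchy : ∀ i, CauchySeq (fun N => Pf N i) := by
    intro i
    apply cauchySeq_of_le_tendsto_0 (fun N : ℕ => (p : ℝ) ^ (-(N : ℤ)))
    · intro n m N hn hm
      rw [dist_eq_norm]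
      have h1 : Pf n i - Pf m i = (Pf n - Pf N) i - (Pf m - Pf N) i := by
        simp only [Pi.sub_apply]; ring
      rw [h1]
      calc ‖(Pf n - Pf N) i - (Pf m - Pf N) i‖
          ≤ ‖(Pf n - Pf N) i‖ ⊔ ‖-((Pf m - Pf N) i)‖ := by
            rw [sub_eq_add_neg]; exact PadicInt.nonarchimedean _ _
        _ ≤ (p : ℝ) ^ (-(t N : ℤ)) ⊔ (p : ℝ) ^ (-(t N : ℤ)) := by
            apply sup_le_sup
            · exact hchain N n hn i
            · rw [norm_neg]; exact hchain N m hm i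
        _ = (p : ℝ) ^ (-(t N : ℤ)) := sup_idem _
        _ ≤ (p : ℝ) ^ (-(N : ℤ)) := htN N
    · have hb : Tendsto (fun N : ℕ => ((p : ℝ)⁻¹) ^ N) atTop (𝓝 0) := by
        apply tendsto_pow_atTop_nhds_zero_of_lt_one
        · positivity
        · rw [inv_lt_one_iff₀]; right; exact_mod_cast (Fact.out : p.Prime).one_lt
      convert hb using 2 with N
      rw [zpow_neg, zpow_natCast, inv_pow]
  choose y hy using fun i => cauchySeq_tendsto_of_complete (hcauchy i)
  have htail : ∀ N, y - Pf N ∈ Ball p I (t N) := by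
    intro N i
    have h1 : Tendsto (fun m => Pf m i - Pf N i) atTop (𝓝 (y i - Pf N i)) :=
      (hy i).sub tendsto_const_nhds
    have h2 : Tendsto (fun m => ‖Pf m i - Pf N i‖) atTop (𝓝 ‖y i - Pf N i‖) := h1.norm
    have h3 : (y - Pf N) i = y i - Pf N i := rfl
    rw [h3]
    apply le_of_tendsto h2
    filter_upwards [eventually_ge_atTop N] with m hm
    have := hchain N m hm i
    simpa using this
  -- Conclusion
  obtain ⟨m, hm⟩ := htor y
  apply (hspec m).2.2 m le_rfl ((p : ℤ_[p]) ^ m • y) hm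
  have h1 : (p : ℤ_[p]) ^ m • Pf (m + 1) - (p : ℤ_[p]) ^ m • y
      = (p : ℤ_[p]) ^ m • (Pf (m + 1) - y) := (smul_sub _ _ _).symm
  rw [h1]
  have h2 : Pf (m + 1) - y ∈ Ball p I (t (m + 1)) := by
    have := ball_neg (htail (m + 1))
    simpa using this
  exact smul_mem_ball h2 m


theorem torsion (G : AddSubgroup (I → ℤ_[p])) (hd : Dense (G : Set (I → ℤ_[p])))
    (hmin : IsMinimalAddGroup G) (hsc : IsSequentiallyComplete G) (a : I → ℤ_[p]) :
    ∃ m : ℕ, (p : ℤ_[p]) ^ m • a ∈ G := by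
  by_cases ha : a = 0
  · exact ⟨0, by simp [ha, G.zero_mem]⟩
  obtain ⟨c, hc0, hcG⟩ := essential G hd hmin a ha
  refine ⟨c.valuation, ?_⟩
  have hspec := PadicInt.unitCoeff_spec hc0
  have key : (p : ℤ_[p]) ^ c.valuation • a
      = ((((PadicInt.unitCoeff hc0)⁻¹ : ℤ_[p]ˣ) : ℤ_[p])) • (c • a) := by
    rw [smul_smul]
    congr 1
    have key2 : ((((PadicInt.unitCoeff hc0)⁻¹ : ℤ_[p]ˣ) : ℤ_[p]))
        * (((PadicInt.unitCoeff hc0) : ℤ_[p]) * (p : ℤ_[p]) ^ c.valuation)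
        = (p : ℤ_[p]) ^ c.valuation := by
      rw [← mul_assoc]
      simp
    rw [← hspec] at key2
    exact key2.symm
  rw [key]
  exact smul_mem' G hsc _ _ hcG

end PadicKeyLemma

/-- **Key Lemma.** Let `p` be a prime and `A = ℤ_p^I` a power of the compact group of
`p`-adic integers with the product topology. If `G` is a dense subgroup of `A` that is
sequentially complete and minimal in the subspace topology, then `p^k · A ⊆ G` for
some `k ∈ ℕ`. -/
theorem pow_smul_mem_of_dense_seqComplete_minimal (p : ℕ) [Fact p.Prime] (I : Type u)
    (G : AddSubgroup (I → ℤ_[p])) (hd : Dense (G : Set (I → ℤ_[p])))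
    (hsc : IsSequentiallyComplete G) (hmin : IsMinimalAddGroup G) :
    ∃ k : ℕ, ∀ a : I → ℤ_[p], ((p : ℤ) ^ k) • a ∈ G := by
  obtain ⟨k, hk⟩ := PadicKeyLemma.main_aux G (PadicKeyLemma.smul_mem' G hsc)
    (PadicKeyLemma.torsion G hd hmin hsc) (PadicKeyLemma.seq_closed G hsc)
  refine ⟨k, fun a => ?_⟩
  have h1 : ((p : ℤ) ^ k) • a = (((p : ℤ) ^ k : ℤ) : ℤ_[p]) • a :=
    (Int.cast_smul_eq_zsmul ℤ_[p] _ a).symm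
  have h2 : (((p : ℤ) ^ k : ℤ) : ℤ_[p]) = (p : ℤ_[p]) ^ k := by push_cast; ring
  rw [h1, h2]
  exact hk a
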